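/- Let Ω ⊂ ℂ be a domain, and suppose the annulus A = {z : d·e^{-m} < |z - o| < d·e^m} with center o ∈ ℂ \ Ω, d > 0, and m > log 4 is contained in Ω. Then for every z with d·e^{-(m - log 2)} < |z - o| < d·e^{m - log 2}: every nearest boundary point ζ ∈ ∂Ω with |z - ζ| = dist(z, ∂Ω) satisfies |ζ - o| ≤ d·e^{-m}, and moreover (1/2)|z - o| ≤ dist(z, ∂Ω) ≤ |z - o|. -/

import Mathlib

open Set

/-- A preconnected set meeting an open set and its complement meets its frontier. -/
lemma aux_frontier_hit {s u : Set ℂ} (hs : IsPreconnected s) (hu : IsOpen u)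
    {x y : ℂ} (hx : x ∈ s) (hxu : x ∈ u) (hy : y ∈ s) (hyu : y ∉ u) :
    ∃ w ∈ s, w ∈ frontier u := by
  by_contra h
  push_neg at h
  have hdisj : Disjoint (frontier u) s := by
    rw [disjoint_comm, Set.disjoint_left]
    exact h
  have hclopen := isClopen_preimage_val hu hdisj
  haveI : PreconnectedSpace s := Subtype.preconnectedSpace hs
  rcases isClopen_iff.mp hclopen with he | hU
  · have hxm : (⟨x, hx⟩ : s) ∈ (Subtype.val ⁻¹' u : Set s) := hxu
    rw [he] at hxm; exact hxm
  · have hym : (⟨y, hy⟩ : s) ∈ (Subtype.val ⁻¹' u : Set s) := by rw [hU]; trivial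
    exact hyu hym

theorem nearest_boundary_point_deep_in_annulus
    (Ω : Set ℂ) (hΩo : IsOpen Ω) (hΩc : IsConnected Ω)
    (o : ℂ) (d m : ℝ) (hd : 0 < d) (hm : Real.log 4 < m) (ho : o ∉ Ω)
    (hA : ∀ z : ℂ, d * Real.exp (-m) < ‖z - o‖ →
      ‖z - o‖ < d * Real.exp m → z ∈ Ω)
    (z : ℂ)
    (hz1 : d * Real.exp (-(m - Real.log 2)) < ‖z - o‖)
    (hz2 : ‖z - o‖ < d * Real.exp (m - Real.log 2)) :
    (∀ ζ ∈ frontier Ω, ‖z - ζ‖ = Metric.infDist z (frontier Ω) →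
        ‖ζ - o‖ ≤ d * Real.exp (-m)) ∧
    (1 / 2) * ‖z - o‖ ≤ Metric.infDist z (frontier Ω) ∧
    Metric.infDist z (frontier Ω) ≤ ‖z - o‖ := by
  have he2 : Real.exp (Real.log 2) = 2 := Real.exp_log (by norm_num)
  have hes : Real.exp (-(m - Real.log 2)) = 2 * Real.exp (-m) := by
    rw [neg_sub, Real.exp_sub, he2, Real.exp_neg]
    ring
  have hes' : Real.exp (m - Real.log 2) = Real.exp m / 2 := by
    rw [Real.exp_sub, he2]
  rw [hes] at hz1
  rw [hes'] at hz2
  -- z is in the annulus, hence in Ω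
  have hem : 0 < Real.exp (-m) := Real.exp_pos _
  have hz1' : d * Real.exp (-m) < ‖z - o‖ := by nlinarith
  have hz2' : ‖z - o‖ < d * Real.exp m := by
    have := Real.exp_pos m
    nlinarith
  have hzΩ : z ∈ Ω := hA z hz1' hz2'
  -- nearest frontier point on segment gives upper bound
  obtain ⟨w, hw_seg, hw_fr⟩ := aux_frontier_hit (convex_segment z o).isPreconnected hΩo
    (left_mem_segment ℝ z o) hzΩ (right_mem_segment ℝ z o) ho
  have hdzw : dist z w ≤ dist z o := by
    have := dist_add_dist_of_mem_segment hw_seg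
    have := dist_nonneg (x := w) (y := o)
    linarith
  have hub : Metric.infDist z (frontier Ω) ≤ ‖z - o‖ := by
    calc Metric.infDist z (frontier Ω) ≤ dist z w := Metric.infDist_le_dist_of_mem hw_fr
    _ ≤ dist z o := hdzw
    _ = ‖z - o‖ := Complex.dist_eq z o
  -- frontier points are not in the annulus
  have hfr : ∀ ζ ∈ frontier Ω, ‖ζ - o‖ ≤ d * Real.exp (-m) ∨
      d * Real.exp m ≤ ‖ζ - o‖ := by
    intro ζ hζ
    by_contra hcon
    push_neg at hcon
    have hmem : ζ ∈ Ω := hA ζ hcon.1 hcon.2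
    rw [hΩo.frontier_eq] at hζ
    exact hζ.2 hmem
  -- distance from z to any frontier point is ≥ |z-o|/2
  have hlb : ∀ ζ ∈ frontier Ω, (1 / 2) * ‖z - o‖ ≤ dist z ζ := by
    intro ζ hζ
    have htri : ‖z - o‖ ≤ dist z ζ + ‖ζ - o‖ := by
      rw [Complex.dist_eq]
      calc ‖z - o‖ = ‖(z - ζ) + (ζ - o)‖ := by ring_nf
      _ ≤ ‖z - ζ‖ + ‖ζ - o‖ := norm_add_le _ _
    have htri2 : ‖ζ - o‖ ≤ ‖z - o‖ + dist z ζ := by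
      rw [Complex.dist_eq]
      calc ‖ζ - o‖ = ‖(z - o) - (z - ζ)‖ := by ring_nf
      _ ≤ ‖z - o‖ + ‖z - ζ‖ := by
        simpa using norm_sub_le (z - o) (z - ζ)
    rcases hfr ζ hζ with h | h
    · nlinarith
    · have := Real.exp_pos m
      nlinarith
  constructor
  · intro ζ hζ hnear
    rcases hfr ζ hζ with h | h
    · exact h
    · exfalso
      have h1 : ‖z - ζ‖ ≤ ‖z - o‖ := by
        rw [hnear]; exact hub
      have htri2 : ‖ζ - o‖ ≤ ‖z - o‖ + ‖z - ζ‖ := by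
        calc ‖ζ - o‖ = ‖(z - o) - (z - ζ)‖ := by ring_nf
        _ ≤ ‖z - o‖ + ‖z - ζ‖ := by
          simpa using norm_sub_le (z - o) (z - ζ)
      have := Real.exp_pos m
      nlinarith
  constructor
  · refine le_of_not_gt fun hlt => ?_
    obtain ⟨ζ, hζ, hdlt⟩ := (Metric.infDist_lt_iff ⟨w, hw_fr⟩).mp hlt
    exact absurd (hlb ζ hζ) (not_le.mpr hdlt)
  · exact hub
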